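/- If a continuous function U: ℝ^N → ℝ is monotone nondecreasing in every direction of an open cone C⁺ = {x ≠ 0 : cos θ < x·e₁/|x| ≤ 1} (i.e., U(x+y) ≥ U(x) for all y ∈ C⁺), and φ ∈ C^{1,1}(x₀) touches U from above at x₀ with ∇φ(x₀) ≠ 0, then the unit direction v of ∇φ(x₀) satisfies v·e₁ ≥ cos(π/2 - θ). -/

import Mathlib

open MeasureTheory Metric Set Real

noncomputable section

/-- `φ` is `C^{1,1}` at `x₀` with gradient vector `p`. -/
def C11At {N : ℕ} (φ : EuclideanSpace ℝ (Fin N) → ℝ) (x₀ p : EuclideanSpace ℝ (Fin N)) : Prop :=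
  ∃ M η₀ : ℝ, 0 < M ∧ 0 < η₀ ∧ ∀ x : EuclideanSpace ℝ (Fin N), ‖x‖ < η₀ →
    |φ (x₀ + x) - φ x₀ - (inner ℝ p x : ℝ)| ≤ M * ‖x‖ ^ 2

/-- limit lemma: if `0 ≤ t + h*c` for all small positive `h`, then `0 ≤ t`. -/
lemma small_aux (t c h₀ : ℝ) (hc : 0 ≤ c) (hh₀ : 0 < h₀)
    (H : ∀ h : ℝ, 0 < h → h < h₀ → 0 ≤ t + h * c) : 0 ≤ t := by
  by_contra ht
  push_neg at ht
  have hd : (0:ℝ) < 2 * (c + 1) := by linarith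
  set h : ℝ := min (h₀ / 2) (-t / (2 * (c + 1))) with hh
  have h1 : 0 < h := lt_min (by linarith) (div_pos (by linarith) hd)
  have h2 : h < h₀ := lt_of_le_of_lt (min_le_left _ _) (by linarith)
  have h4 : h ≤ -t / (2 * (c + 1)) := min_le_right _ _
  have hkey : h * (2 * (c + 1)) ≤ -t := (le_div_iff₀ hd).mp h4
  have h3 := H h h1 h2
  nlinarith [mul_nonneg h1.le hc]

/-- dual-cone geometry lemma. -/
lemma cone_dual {E : Type*} [NormedAddCommGroup E] [InnerProductSpace ℝ E]
    (θ : ℝ) (hθ0 : 0 < θ) (hθ : θ < π / 2) (e p : E) (he : ‖e‖ = 1) (hp : p ≠ 0)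
    (key : ∀ y : E, y ≠ 0 → Real.cos θ < (inner ℝ y e : ℝ) / ‖y‖ → 0 ≤ (inner ℝ p y : ℝ)) :
    Real.sin θ * ‖p‖ ≤ (inner ℝ p e : ℝ) := by
  have hcosθ1 : Real.cos θ < 1 := by
    calc Real.cos θ < Real.cos 0 := by
          apply Real.strictAntiOn_cos ⟨by linarith [Real.pi_pos], by linarith [Real.pi_pos]⟩
            ⟨by linarith [Real.pi_pos], by linarith [Real.pi_pos]⟩ hθ0
      _ = 1 := Real.cos_zero
  have hcosθpos : 0 < Real.cos θ := Real.cos_pos_of_mem_Ioo ⟨by linarith, hθ⟩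
  have hsinθpos : 0 < Real.sin θ := Real.sin_pos_of_pos_of_lt_pi hθ0 (by linarith [Real.pi_pos])
  have hee : (inner ℝ e e : ℝ) = 1 := by
    rw [real_inner_self_eq_norm_sq, he]; norm_num
  have he0 : e ≠ 0 := by
    intro h; rw [h] at he; simp at he
  have hpe : 0 ≤ (inner ℝ p e : ℝ) := by
    apply key e he0
    rw [hee, he]; simpa using hcosθ1
  have hppos : 0 < ‖p‖ := norm_pos_iff.mpr hp
  obtain ⟨a, ha⟩ : ∃ a : ℝ, a = (inner ℝ p e : ℝ) := ⟨_, rfl⟩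
  obtain ⟨w, hw⟩ : ∃ w : E, w = p - a • e := ⟨_, rfl⟩
  rw [← ha] at hpe ⊢
  have hwe : (inner ℝ w e : ℝ) = 0 := by
    rw [hw, inner_sub_left, real_inner_smul_left, hee, ha]; ring
  have hew : (inner ℝ e w : ℝ) = 0 := by rw [real_inner_comm]; exact hwe
  have hw2 : ‖w‖ ^ 2 = ‖p‖ ^ 2 - a ^ 2 := by
    rw [hw, norm_sub_sq_real, real_inner_smul_right, ← ha, norm_smul, Real.norm_eq_abs, he,
      mul_one, sq_abs]
    ring
  have hpw : (inner ℝ p w : ℝ) = ‖p‖ ^ 2 - a ^ 2 := by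
    rw [hw, inner_sub_right, real_inner_smul_right, ← ha, real_inner_self_eq_norm_sq]
    ring
  by_cases hw0 : w = 0
  · -- p is parallel to e
    have hz : ‖w‖ ^ 2 = 0 := by rw [hw0]; simp
    have habs : a ^ 2 = ‖p‖ ^ 2 := by nlinarith
    have hap : a = ‖p‖ := by
      have h1 : a = Real.sqrt (a ^ 2) := (Real.sqrt_sq hpe).symm
      rw [h1, habs, Real.sqrt_sq hppos.le]
    rw [hap]
    nlinarith [Real.sin_le_one θ]
  · have hwpos : 0 < ‖w‖ := norm_pos_iff.mpr hw0
    obtain ⟨y₀, hy₀⟩ : ∃ y₀ : E, y₀ = Real.cos θ • e - (Real.sin θ / ‖w‖) • w := ⟨_, rfl⟩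
    have hy₀e : (inner ℝ y₀ e : ℝ) = Real.cos θ := by
      rw [hy₀, inner_sub_left, real_inner_smul_left, real_inner_smul_left, hee, hwe]; ring
    have hpy₀ : (inner ℝ p y₀ : ℝ) = Real.cos θ * a - Real.sin θ * ‖w‖ := by
      rw [hy₀, inner_sub_right, real_inner_smul_right, real_inner_smul_right, ← ha, hpw]
      rw [← hw2]
      field_simp
    have hny₀ : ‖y₀‖ = 1 := by
      have hsq : ‖y₀‖ ^ 2 = 1 := by
        rw [hy₀, norm_sub_sq_real, real_inner_smul_left, real_inner_smul_right, hew,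
          norm_smul, norm_smul, Real.norm_eq_abs, Real.norm_eq_abs, he,
          abs_of_nonneg hcosθpos.le, abs_of_nonneg (by positivity : (0:ℝ) ≤ Real.sin θ / ‖w‖)]
        field_simp
        linear_combination ‖w‖ * Real.sin_sq_add_cos_sq θ
      calc ‖y₀‖ = Real.sqrt (‖y₀‖ ^ 2) := (Real.sqrt_sq (norm_nonneg _)).symm
        _ = 1 := by rw [hsq]; exact Real.sqrt_one
    have hkey2 : 0 ≤ Real.cos θ * a - Real.sin θ * ‖w‖ := by
      apply small_aux _ a 1 hpe one_pos
      intro ε' hε'pos _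
      have hye : (inner ℝ (y₀ + ε' • e) e : ℝ) = Real.cos θ + ε' := by
        rw [inner_add_left, real_inner_smul_left, hy₀e, hee]; ring
      have hyne : y₀ + ε' • e ≠ 0 := by
        intro hz
        rw [hz, inner_zero_left] at hye
        nlinarith
      have hnle : ‖y₀ + ε' • e‖ ≤ 1 + ε' := by
        calc ‖y₀ + ε' • e‖ ≤ ‖y₀‖ + ‖ε' • e‖ := norm_add_le _ _
          _ = 1 + ε' := by
            rw [hny₀, norm_smul, Real.norm_eq_abs, he, abs_of_pos hε'pos, mul_one]
      have hnpos : 0 < ‖y₀ + ε' • e‖ := norm_pos_iff.mpr hyne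
      have hcone : Real.cos θ < (inner ℝ (y₀ + ε' • e) e : ℝ) / ‖y₀ + ε' • e‖ := by
        rw [hye, lt_div_iff₀ hnpos]
        nlinarith
      have hk := key _ hyne hcone
      rw [inner_add_right, real_inner_smul_right, ← ha, hpy₀] at hk
      linarith
    have hapos : 0 < a := by nlinarith
    have hsqk : (Real.sin θ * ‖w‖) * (Real.sin θ * ‖w‖) ≤ (Real.cos θ * a) * (Real.cos θ * a) :=
      mul_self_le_mul_self (mul_nonneg hsinθpos.le hwpos.le) (by linarith)
    have hsq2 : (Real.sin θ * ‖p‖) ^ 2 ≤ a ^ 2 := by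
      nlinarith [hsqk, hw2, Real.sin_sq_add_cos_sq θ, sq_nonneg (Real.sin θ), sq_nonneg a]
    exact (pow_le_pow_iff_left₀ (mul_nonneg hsinθpos.le hppos.le) hapos.le (by norm_num)).mp hsq2

/-- if `U` is nondecreasing in every direction of the cone
`C⁺ = {x ≠ 0 : cos θ < x·e₁/|x| ≤ 1}` and `φ ∈ C^{1,1}(x₀)` touches `U` from above
at `x₀` with nonzero gradient, then the unit direction `v` of the gradient
satisfies `v·e₁ ≥ cos(π/2 - θ)`. -/
theorem stmt_13 {N : ℕ} (hN : 0 < N) (θ : ℝ) (hθ0 : 0 < θ) (hθ : θ < π / 2)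
    (U : EuclideanSpace ℝ (Fin N) → ℝ) (hU_cont : Continuous U)
    (hmono : ∀ x : EuclideanSpace ℝ (Fin N),
      ∀ y ∈ {y : EuclideanSpace ℝ (Fin N) | y ≠ 0 ∧
        Real.cos θ < (inner ℝ y (EuclideanSpace.single (⟨0, hN⟩ : Fin N) (1 : ℝ)) : ℝ) / ‖y‖},
      U x ≤ U (x + y))
    (x₀ : EuclideanSpace ℝ (Fin N))
    (φ : EuclideanSpace ℝ (Fin N) → ℝ) (p : EuclideanSpace ℝ (Fin N))
    (hC11 : C11At φ x₀ p) (hp : p ≠ 0)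
    (htouch : φ x₀ = U x₀ ∧ ∃ ε > (0 : ℝ), ∀ x ∈ Metric.ball x₀ ε, U x ≤ φ x) :
    Real.cos (π / 2 - θ) ≤
      (inner ℝ (‖p‖⁻¹ • p) (EuclideanSpace.single (⟨0, hN⟩ : Fin N) (1 : ℝ)) : ℝ) := by
  obtain ⟨hφeq, ε, hε, hball⟩ := htouch
  obtain ⟨M, η₀, hM, hη₀, hC⟩ := hC11
  set e : EuclideanSpace ℝ (Fin N) := EuclideanSpace.single (⟨0, hN⟩ : Fin N) (1 : ℝ) with he_def
  have he : ‖e‖ = 1 := by simp [he_def, EuclideanSpace.norm_single]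
  -- key step: ⟪p, y⟫ ≥ 0 for every y in the open cone
  have key : ∀ y : EuclideanSpace ℝ (Fin N), y ≠ 0 →
      Real.cos θ < (inner ℝ y e : ℝ) / ‖y‖ → 0 ≤ (inner ℝ p y : ℝ) := by
    intro y hy hcone
    have hy0 : 0 < ‖y‖ := norm_pos_iff.mpr hy
    set h₀ : ℝ := min (η₀ / ‖y‖) (ε / ‖y‖) with hh₀def
    have hh₀ : 0 < h₀ := lt_min (by positivity) (by positivity)
    apply small_aux _ (M * ‖y‖ ^ 2) h₀ (by positivity) hh₀
    intro h hhpos hhlt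
    have hny : ‖h • y‖ = h * ‖y‖ := by
      rw [norm_smul, Real.norm_eq_abs, abs_of_pos hhpos]
    have hmem : (h • y) ∈ {y : EuclideanSpace ℝ (Fin N) | y ≠ 0 ∧
        Real.cos θ < (inner ℝ y e : ℝ) / ‖y‖} := by
      refine ⟨smul_ne_zero (ne_of_gt hhpos) hy, ?_⟩
      rw [real_inner_smul_left, hny, mul_div_mul_left _ _ (ne_of_gt hhpos)]
      exact hcone
    have h1 : U x₀ ≤ U (x₀ + h • y) := hmono x₀ (h • y) hmem
    have h2 : U (x₀ + h • y) ≤ φ (x₀ + h • y) := by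
      apply hball
      rw [Metric.mem_ball, dist_eq_norm, add_sub_cancel_left, hny]
      calc h * ‖y‖ < h₀ * ‖y‖ := mul_lt_mul_of_pos_right hhlt hy0
        _ ≤ (ε / ‖y‖) * ‖y‖ := mul_le_mul_of_nonneg_right (min_le_right _ _) hy0.le
        _ = ε := div_mul_cancel₀ _ (ne_of_gt hy0)
    have h3 : |φ (x₀ + h • y) - φ x₀ - (inner ℝ p (h • y) : ℝ)| ≤ M * ‖h • y‖ ^ 2 := by
      apply hC
      rw [hny]
      calc h * ‖y‖ < h₀ * ‖y‖ := mul_lt_mul_of_pos_right hhlt hy0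
        _ ≤ (η₀ / ‖y‖) * ‖y‖ := mul_le_mul_of_nonneg_right (min_le_left _ _) hy0.le
        _ = η₀ := div_mul_cancel₀ _ (ne_of_gt hy0)
    rw [abs_le] at h3
    have hps : (inner ℝ p (h • y) : ℝ) = h * (inner ℝ p y : ℝ) := real_inner_smul_right p y h
    have hub := h3.2
    rw [hps, hny] at hub
    have hφ0 : φ x₀ ≤ φ (x₀ + h • y) := by rw [hφeq]; exact le_trans h1 h2
    have hstep : 0 ≤ h * (inner ℝ p y : ℝ) + M * (h * ‖y‖) ^ 2 := by linarith
    nlinarith [hstep, mul_pos hhpos hhpos]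
  have hppos : 0 < ‖p‖ := norm_pos_iff.mpr hp
  have := cone_dual θ hθ0 hθ e p he hp key
  rw [Real.cos_pi_div_two_sub, real_inner_smul_left, inv_mul_eq_div, le_div_iff₀ hppos]
  exact this
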